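/- Let ρ_AB be a pure bipartite density operator on a finite-dimensional Hilbert space A⊗B. Then V(ρ_AB ‖ I_A ⊗ ρ_B) = V(A)_ρ, where V(A)_ρ = Tr(ρ_A (log ρ_A)²) − (−Tr(ρ_A log ρ_A))² is the varentropy of the reduced state ρ_A. -/

import Mathlib

open Matrix Filter
open scoped ComplexOrder Classical Kronecker

variable {n : Type*} [Fintype n] [DecidableEq n]

/-- Square root of a positive semidefinite matrix (0 if not PSD). -/
noncomputable def msqrt (A : Matrix n n ℂ) : Matrix n n ℂ :=
  if h : A.PosSemidef then (h.1.eigenvectorUnitary : Matrix n n ℂ) *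
    diagonal ((↑) ∘ (√·) ∘ h.1.eigenvalues) * (star (h.1.eigenvectorUnitary : Matrix n n ℂ)) else 0

/-- Trace norm ‖A‖₁ = Tr √(AᴴA). -/
noncomputable def traceNorm (A : Matrix n n ℂ) : ℝ :=
  ((msqrt (Aᴴ * A)).trace).re

/-- Fidelity F(ρ,σ) = ‖√ρ √σ‖₁. -/
noncomputable def fidelity (ρ σ : Matrix n n ℂ) : ℝ :=
  traceNorm (msqrt ρ * msqrt σ)

/-- Purified distance for normalized states. -/
noncomputable def purifiedDist (ρ σ : Matrix n n ℂ) : ℝ :=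
  Real.sqrt (1 - (fidelity ρ σ) ^ 2)

/-- Density operator predicate. -/
def IsDensity (ρ : Matrix n n ℂ) : Prop := ρ.PosSemidef ∧ ρ.trace = 1

/-- Subnormalized state predicate. -/
def IsSubnormalized (ρ : Matrix n n ℂ) : Prop := ρ.PosSemidef ∧ ρ.trace.re ≤ 1

/-- Generalized fidelity for subnormalized states. -/
noncomputable def genFidelity (ρ σ : Matrix n n ℂ) : ℝ :=
  traceNorm (msqrt ρ * msqrt σ) + Real.sqrt ((1 - ρ.trace.re) * (1 - σ.trace.re))

/-- Purified distance via the generalized fidelity. -/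
noncomputable def purifiedDistG (ρ σ : Matrix n n ℂ) : ℝ :=
  Real.sqrt (1 - (genFidelity ρ σ) ^ 2)

/-- Max-relative entropy (base 2). -/
noncomputable def Dmax (ρ σ : Matrix n n ℂ) : ℝ :=
  sInf {l : ℝ | ((2:ℝ) ^ l • σ - ρ).PosSemidef}

/-- Min-relative entropy (base 2). -/
noncomputable def Dmin (ρ σ : Matrix n n ℂ) : ℝ :=
  -Real.logb 2 ((fidelity ρ σ) ^ 2)

/-- ε-ball of subnormalized states around ρ in purified distance. -/
def epsBall (ε : ℝ) (ρ : Matrix n n ℂ) : Set (Matrix n n ℂ) :=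
  {ρ' | IsSubnormalized ρ' ∧ purifiedDistG ρ ρ' ≤ ε}

/-- Matrix logarithm via the hermitian functional calculus (0 if not Hermitian). -/
noncomputable def mlog (A : Matrix n n ℂ) : Matrix n n ℂ :=
  if h : A.IsHermitian then h.cfc Real.log else 0

/-- Quantum relative entropy D(ρ‖σ) = Tr ρ(log ρ − log σ). -/
noncomputable def relEnt (ρ σ : Matrix n n ℂ) : ℝ :=
  ((ρ * (mlog ρ - mlog σ)).trace).re

/-- Relative entropy variance V(ρ‖σ). -/
noncomputable def relVar (ρ σ : Matrix n n ℂ) : ℝ :=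
  ((ρ * (mlog ρ - mlog σ) ^ 2).trace).re - (relEnt ρ σ) ^ 2

/-- Varentropy V(A)_ρ = Tr(ρ (log ρ)²) − (Tr ρ log ρ)². -/
noncomputable def varentropy (ρ : Matrix n n ℂ) : ℝ :=
  ((ρ * (mlog ρ) ^ 2).trace).re - (((ρ * mlog ρ).trace).re) ^ 2

/-- Partial trace over the second (B) register. -/
noncomputable def ptraceB {A B : Type*} [Fintype A] [Fintype B]
    (M : Matrix (A × B) (A × B) ℂ) : Matrix A A ℂ :=
  Matrix.of fun a a' => ∑ b, M (a, b) (a', b)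

/-- Partial trace over the first (A) register. -/
noncomputable def ptraceA {A B : Type*} [Fintype A] [Fintype B]
    (M : Matrix (A × B) (A × B) ℂ) : Matrix B B ℂ :=
  Matrix.of fun b b' => ∑ a, M (a, b) (a, b')

namespace Helpers
open Polynomial
variable {n : Type*} [Fintype n] [DecidableEq n] {A : Matrix n n ℂ}


lemma star_mul_self (hA : A.IsHermitian) :
    star (hA.eigenvectorUnitary : Matrix n n ℂ) * (hA.eigenvectorUnitary : Matrix n n ℂ) = 1 :=
  Unitary.star_mul_self_of_mem (SetLike.coe_mem _)

lemma mul_star_self (hA : A.IsHermitian) :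
    (hA.eigenvectorUnitary : Matrix n n ℂ) * star (hA.eigenvectorUnitary : Matrix n n ℂ) = 1 :=
  Unitary.mul_star_self_of_mem (SetLike.coe_mem _)

lemma cfc_mul (hA : A.IsHermitian) (f g : ℝ → ℝ) :
    hA.cfc f * hA.cfc g = hA.cfc (fun x => f x * g x) := by
  unfold Matrix.IsHermitian.cfc
  simp only [Unitary.conjStarAlgAut_apply]
  rw [mul_assoc, mul_assoc, ← mul_assoc (star _) _, ← mul_assoc (star _),
    star_mul_self hA, one_mul, ← mul_assoc, ← mul_assoc, mul_assoc _ _ (diagonal _),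
    diagonal_mul_diagonal]
  congr 1
  ext i
  simp

lemma cfc_trace (hA : A.IsHermitian) (f : ℝ → ℝ) :
    (hA.cfc f).trace = ∑ i, ((f (hA.eigenvalues i) : ℝ) : ℂ) := by
  unfold Matrix.IsHermitian.cfc
  simp only [Unitary.conjStarAlgAut_apply]
  rw [Matrix.trace_mul_comm, ← mul_assoc, star_mul_self hA, one_mul, trace_diagonal]
  simp

lemma cfc_congr (hA : A.IsHermitian) {f g : ℝ → ℝ}
    (h : ∀ i, f (hA.eigenvalues i) = g (hA.eigenvalues i)) : hA.cfc f = hA.cfc g := by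
  unfold Matrix.IsHermitian.cfc
  have : (RCLike.ofReal ∘ f ∘ hA.eigenvalues : n → ℂ) = RCLike.ofReal ∘ g ∘ hA.eigenvalues :=
    funext fun i => by simp [h i]
  rw [this]

lemma cfc_id (hA : A.IsHermitian) : hA.cfc id = A := hA.spectral_theorem.symm

lemma cfc_one (hA : A.IsHermitian) : hA.cfc (fun _ => 1) = 1 := by
  unfold Matrix.IsHermitian.cfc
  simp only [Unitary.conjStarAlgAut_apply]
  have : diagonal (RCLike.ofReal ∘ (fun _ : ℝ => (1:ℝ)) ∘ hA.eigenvalues) = (1 : Matrix n n ℂ) := by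
    simp [Function.comp_def, diagonal_one]
  rw [this, mul_one, mul_star_self hA]

lemma cfc_pow (hA : A.IsHermitian) (f : ℝ → ℝ) (k : ℕ) :
    hA.cfc f ^ k = hA.cfc (fun x => f x ^ k) := by
  induction k with
  | zero => simpa using (cfc_one hA).symm
  | succ k ih =>
    rw [pow_succ, ih, cfc_mul]
    exact cfc_congr hA (fun i => (pow_succ _ _).symm)

lemma pow_trace_eq (hA : A.IsHermitian) (k : ℕ) :
    (A ^ k).trace = ∑ i, ((hA.eigenvalues i : ℝ) ^ k : ℂ) := by
  conv_lhs => rw [show A = hA.cfc id from (cfc_id hA).symm]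
  rw [cfc_pow hA, cfc_trace hA]
  simp


lemma aeval_unitary_conj (U M : Matrix n n ℂ) (hU : U * star U = 1) (hU' : star U * U = 1) (p : ℝ[X]) :
    aeval (U * M * star U) p = U * aeval M p * star U := by
  induction p using Polynomial.induction_on with
  | C c =>
    simp only [aeval_C, Algebra.algebraMap_eq_smul_one]
    rw [mul_smul_comm, smul_mul_assoc, mul_one, hU]
  | add p q ih1 ih2 => rw [_root_.map_add, _root_.map_add, ih1, ih2, mul_add, add_mul]
  | monomial k c ih =>
    rw [pow_succ, ← mul_assoc,
      _root_.map_mul (aeval (U * M * star U)) (C c * X ^ k) X,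
      _root_.map_mul (aeval M) (C c * X ^ k) X, ih, aeval_X, aeval_X,
      show U * (aeval M) (C c * X ^ k) * star U * (U * M * star U)
          = U * ((aeval M) (C c * X ^ k) * (star U * U) * M) * star U by noncomm_ring,
      hU', mul_one]
lemma aeval_diagonal (d : n → ℂ) (p : ℝ[X]) :
    aeval (diagonal d) p = diagonal (fun i => aeval (d i) p) := by
  induction p using Polynomial.induction_on with
  | C c =>
    simp only [aeval_C, Matrix.algebraMap_eq_diagonal]
    rfl
  | add p q ih1 ih2 => simp only [_root_.map_add, ih1, ih2, diagonal_add]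
  | monomial k c ih =>
    simp only [pow_succ, ← mul_assoc, _root_.map_mul, ih, aeval_X, diagonal_mul_diagonal]

lemma cfc_aeval (hA : A.IsHermitian) (p : ℝ[X]) :
    hA.cfc (fun x => eval x p) = aeval A p := by
  conv_rhs => rw [hA.spectral_theorem]
  rw [Unitary.conjStarAlgAut_apply, aeval_unitary_conj _ _ (Helpers.mul_star_self hA) (Helpers.star_mul_self hA), aeval_diagonal]
  unfold Matrix.IsHermitian.cfc
  simp only [Unitary.conjStarAlgAut_apply]
  have : (fun i => aeval ((RCLike.ofReal ∘ hA.eigenvalues : n → ℂ) i) p)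
      = (RCLike.ofReal ∘ (fun x => eval x p) ∘ hA.eigenvalues : n → ℂ) := by
    funext i
    simp only [Function.comp_apply]
    simp only [← RCLike.algebraMap_eq_ofReal]
    exact aeval_algebraMap_apply_eq_algebraMap_eval _ _
  rw [this]

lemma trace_aeval_X_mul {m : Type*} [Fintype m] [DecidableEq m] (M : Matrix m m ℂ) (q : ℝ[X]) :
    (aeval M (X * q)).trace
      = ∑ k ∈ Finset.range (q.natDegree + 1), q.coeff k • (M ^ (k + 1)).trace := by
  rw [_root_.map_mul, aeval_X, aeval_eq_sum_range, Finset.mul_sum]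
  rw [Matrix.trace_sum]
  congr 1
  funext k
  rw [mul_smul_comm, ← pow_succ', Matrix.trace_smul]

lemma spec_transfer {a b : Type*} [Fintype a] [DecidableEq a] [Fintype b] [DecidableEq b]
    {M : Matrix a a ℂ} {N : Matrix b b ℂ} (hM : M.IsHermitian) (hN : N.IsHermitian)
    (htr : ∀ k : ℕ, (M ^ (k + 1)).trace = (N ^ (k + 1)).trace)
    (f : ℝ → ℝ) (hf : f 0 = 0) :
    ∑ i, ((f (hM.eigenvalues i) : ℝ) : ℂ) = ∑ j, ((f (hN.eigenvalues j) : ℝ) : ℂ) := by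
  classical
  set s : Finset ℝ :=
    (Finset.univ.image hM.eigenvalues ∪ Finset.univ.image hN.eigenvalues) ∪ {0} with hs
  have hvs : Set.InjOn (id : ℝ → ℝ) s := fun x _ y _ h => h
  set p : ℝ[X] := Lagrange.interpolate s id f with hp
  have hnode : ∀ x ∈ s, eval x p = f x := fun x hx =>
    Lagrange.eval_interpolate_at_node (r := f) hvs hx
  have h0 : (0:ℝ) ∈ s := by simp [hs]
  have hdvd : (X : ℝ[X]) ∣ p := X_dvd_iff.mpr (by
    rw [coeff_zero_eq_eval_zero, hnode 0 h0, hf])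
  obtain ⟨q, hq⟩ := hdvd
  have hMs : ∀ i, hM.eigenvalues i ∈ s := fun i => by
    exact Finset.mem_union_left _ (Finset.mem_union_left _
      (Finset.mem_image_of_mem _ (Finset.mem_univ i)))
  have hNs : ∀ j, hN.eigenvalues j ∈ s := fun j => by
    exact Finset.mem_union_left _ (Finset.mem_union_right _
      (Finset.mem_image_of_mem _ (Finset.mem_univ j)))
  calc ∑ i, ((f (hM.eigenvalues i) : ℝ) : ℂ)
      = ∑ i, ((eval (hM.eigenvalues i) p : ℝ) : ℂ) := by
        congr 1; funext i; rw [hnode _ (hMs i)]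
    _ = (hM.cfc (fun x => eval x p)).trace := (cfc_trace hM (fun x => eval x p)).symm
    _ = (aeval M p).trace := by rw [cfc_aeval]
    _ = ∑ k ∈ Finset.range (q.natDegree + 1), q.coeff k • (M ^ (k + 1)).trace := by
        rw [hq]; exact trace_aeval_X_mul M q
    _ = ∑ k ∈ Finset.range (q.natDegree + 1), q.coeff k • (N ^ (k + 1)).trace := by
        congr 1; funext k; rw [htr k]
    _ = (aeval N p).trace := by rw [hq]; exact (trace_aeval_X_mul N q).symm
    _ = (hN.cfc (fun x => eval x p)).trace := by rw [cfc_aeval]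
    _ = ∑ j, ((eval (hN.eigenvalues j) p : ℝ) : ℂ) := cfc_trace hN (fun x => eval x p)
    _ = ∑ j, ((f (hN.eigenvalues j) : ℝ) : ℂ) := by
        congr 1; funext j; rw [hnode _ (hNs j)]

lemma trace_pow_shift {a b : Type*} [Fintype a] [DecidableEq a] [Fintype b] [DecidableEq b] (N : Matrix b a ℂ) (k : ℕ) :
    ((N * Nᴴ) ^ (k + 1)).trace = ((Nᴴ * N) ^ (k + 1)).trace := by
  have h : ∀ m : ℕ, (N * Nᴴ) ^ (m + 1) = N * ((Nᴴ * N) ^ m * Nᴴ) := by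
    intro m
    induction m with
    | zero => simp [mul_assoc]
    | succ m ih =>
      rw [pow_succ, ih]
      calc N * ((Nᴴ * N) ^ m * Nᴴ) * (N * Nᴴ)
          = N * ((Nᴴ * N) ^ m * (Nᴴ * N) * Nᴴ) := by simp only [Matrix.mul_assoc]
        _ = N * ((Nᴴ * N) ^ (m + 1) * Nᴴ) := by rw [← pow_succ]
  rw [h k, Matrix.trace_mul_comm, Matrix.mul_assoc, ← pow_succ]

lemma kron_conjTranspose {a b : Type*} [Fintype a] [Fintype b]
    (M : Matrix a a ℂ) (N : Matrix b b ℂ) : (M ⊗ₖ N)ᴴ = Mᴴ ⊗ₖ Nᴴ := by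
  ext ⟨i, j⟩ ⟨k, l⟩
  simp [Matrix.conjTranspose_apply, Matrix.kroneckerMap_apply, mul_comm]

lemma aeval_one_kron {a b : Type*} [Fintype a] [DecidableEq a] [Fintype b] [DecidableEq b]
    (X : Matrix b b ℂ) (p : ℝ[X]) :
    aeval ((1 : Matrix a a ℂ) ⊗ₖ X) p = (1 : Matrix a a ℂ) ⊗ₖ aeval X p := by
  induction p using Polynomial.induction_on with
  | C c =>
    simp only [aeval_C, Algebra.algebraMap_eq_smul_one]
    rw [Matrix.kronecker_smul, Matrix.one_kronecker_one]
  | add p q ih1 ih2 => simp only [_root_.map_add, ih1, ih2, Matrix.kronecker_add]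
  | monomial k c ih =>
    rw [pow_succ, ← mul_assoc,
      _root_.map_mul (aeval ((1 : Matrix a a ℂ) ⊗ₖ X)) (C c * Polynomial.X ^ k) Polynomial.X,
      _root_.map_mul (aeval X) (C c * Polynomial.X ^ k) Polynomial.X, ih, aeval_X, aeval_X,
      ← Matrix.mul_kronecker_mul, one_mul]

lemma mlog_eq (hA : A.IsHermitian) : mlog A = hA.cfc Real.log := dif_pos hA

lemma mul_cfc_pow (hA : A.IsHermitian) (f : ℝ → ℝ) (k : ℕ) :
    A * (hA.cfc f) ^ k = hA.cfc (fun x => x * f x ^ k) := by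
  have h := cfc_mul hA id (fun x => f x ^ k)
  rw [cfc_id] at h
  rw [cfc_pow, h]
  exact cfc_congr hA (fun i => rfl)

lemma hermitian_one_kron {a b : Type*} [Fintype a] [DecidableEq a] [Fintype b] [DecidableEq b]
    {σ : Matrix b b ℂ} (hσ : σ.IsHermitian) :
    ((1 : Matrix a a ℂ) ⊗ₖ σ).IsHermitian := by
  unfold Matrix.IsHermitian
  rw [kron_conjTranspose, Matrix.conjTranspose_one, hσ.eq]

lemma mlog_one_kron {a b : Type*} [Fintype a] [DecidableEq a] [Fintype b] [DecidableEq b]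
    {σ : Matrix b b ℂ} (hσ : σ.IsHermitian) :
    mlog ((1 : Matrix a a ℂ) ⊗ₖ σ) = (1 : Matrix a a ℂ) ⊗ₖ mlog σ := by
  classical
  have h1 : ((1 : Matrix a a ℂ) ⊗ₖ σ).IsHermitian := hermitian_one_kron hσ
  rw [mlog_eq h1, mlog_eq hσ]
  set s : Finset ℝ := Finset.univ.image h1.eigenvalues ∪ Finset.univ.image hσ.eigenvalues with hs
  have hvs : Set.InjOn (id : ℝ → ℝ) s := fun x _ y _ h => h
  set p : ℝ[X] := Lagrange.interpolate s id Real.log with hp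
  have hnode : ∀ x ∈ s, eval x p = Real.log x := fun x hx =>
    Lagrange.eval_interpolate_at_node (r := Real.log) hvs hx
  have e1 : h1.cfc Real.log = h1.cfc (fun x => eval x p) :=
    cfc_congr h1 (fun i => (hnode _ (Finset.mem_union_left _
      (Finset.mem_image_of_mem _ (Finset.mem_univ i)))).symm)
  have e2 : hσ.cfc Real.log = hσ.cfc (fun x => eval x p) :=
    cfc_congr hσ (fun i => (hnode _ (Finset.mem_union_right _
      (Finset.mem_image_of_mem _ (Finset.mem_univ i)))).symm)
  rw [e1, e2, cfc_aeval, cfc_aeval, aeval_one_kron]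

lemma herm_idem_log_zero (hA : A.IsHermitian) (hidem : A * A = A) : hA.cfc Real.log = 0 := by
  have key := hA.conjStarAlgAut_star_eigenvectorUnitary
  rw [Unitary.conjStarAlgAut_star_apply] at key
  have hd : diagonal (RCLike.ofReal ∘ hA.eigenvalues : n → ℂ)
      * diagonal (RCLike.ofReal ∘ hA.eigenvalues) = diagonal (RCLike.ofReal ∘ hA.eigenvalues) := by
    rw [← key]
    calc (star (hA.eigenvectorUnitary : Matrix n n ℂ) * A * hA.eigenvectorUnitary)
          * (star (hA.eigenvectorUnitary : Matrix n n ℂ) * A * hA.eigenvectorUnitary)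
        = star (hA.eigenvectorUnitary : Matrix n n ℂ)
            * (A * ((hA.eigenvectorUnitary : Matrix n n ℂ)
              * star (hA.eigenvectorUnitary : Matrix n n ℂ)) * A)
            * hA.eigenvectorUnitary := by simp only [Matrix.mul_assoc]
      _ = star (hA.eigenvectorUnitary : Matrix n n ℂ) * A * hA.eigenvectorUnitary := by
          rw [mul_star_self hA, Matrix.mul_one, hidem]
  rw [diagonal_mul_diagonal] at hd
  have hev : ∀ i, Real.log (hA.eigenvalues i) = 0 := by
    intro i
    have := congrFun (congrArg Matrix.diag hd) i
    simp only [Matrix.diag_apply, Matrix.diagonal_apply_eq, Pi.mul_apply,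
      Function.comp_apply] at this
    have h2 : (hA.eigenvalues i : ℂ) * hA.eigenvalues i = hA.eigenvalues i := this
    have h3 : hA.eigenvalues i * hA.eigenvalues i = hA.eigenvalues i := by
      exact_mod_cast h2
    have h4 : hA.eigenvalues i * (hA.eigenvalues i - 1) = 0 := by linear_combination h3
    rcases mul_eq_zero.mp h4 with h | h
    · rw [h, Real.log_zero]
    · have : hA.eigenvalues i = 1 := by linarith
      rw [this, Real.log_one]
  unfold Matrix.IsHermitian.cfc
  simp only [Unitary.conjStarAlgAut_apply]
  have hz : (RCLike.ofReal ∘ Real.log ∘ hA.eigenvalues : n → ℂ) = fun _ => 0 :=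
    funext fun i => by simp [hev i]
  rw [hz, diagonal_zero, Matrix.mul_zero, Matrix.zero_mul]

lemma ptraceA_hermitian {a b : Type*} [Fintype a] [Fintype b]
    {ρ : Matrix (a × b) (a × b) ℂ} (hρ : ρ.IsHermitian) : (ptraceA ρ).IsHermitian := by
  ext x y
  simp only [Matrix.conjTranspose_apply, ptraceA, Matrix.of_apply, star_sum]
  exact Finset.sum_congr rfl fun i _ => hρ.apply (i, x) (i, y)

lemma ptraceB_hermitian {a b : Type*} [Fintype a] [Fintype b]
    {ρ : Matrix (a × b) (a × b) ℂ} (hρ : ρ.IsHermitian) : (ptraceB ρ).IsHermitian := by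
  ext x y
  simp only [Matrix.conjTranspose_apply, ptraceB, Matrix.of_apply, star_sum]
  exact Finset.sum_congr rfl fun i _ => hρ.apply (x, i) (y, i)

lemma trace_mul_one_kron {a b : Type*} [Fintype a] [DecidableEq a] [Fintype b] [DecidableEq b]
    (ρ : Matrix (a × b) (a × b) ℂ) (X : Matrix b b ℂ) :
    (ρ * ((1 : Matrix a a ℂ) ⊗ₖ X)).trace = (ptraceA ρ * X).trace := by
  classical
  have collapse : ∀ i : a × b, (∑ j : a × b, ρ i j * ((1 : Matrix a a ℂ) ⊗ₖ X) j i)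
      = ∑ b', ρ i (i.1, b') * X b' i.2 := by
    intro i
    rw [Fintype.sum_prod_type, Finset.sum_comm]
    simp [Matrix.kroneckerMap_apply, Matrix.one_apply, Finset.sum_ite_eq', ite_mul, one_mul,
      zero_mul, mul_ite, mul_zero]
  simp only [Matrix.trace, Matrix.diag_apply, Matrix.mul_apply]
  simp only [collapse]
  rw [Fintype.sum_prod_type]
  simp only [ptraceA, Matrix.of_apply, Finset.sum_mul]
  rw [Finset.sum_comm]
  refine Finset.sum_congr rfl fun y _ => ?_
  rw [Finset.sum_comm]

end Helpers

theorem stmt_7 {A B : Type*} [Fintype A] [DecidableEq A] [Fintype B] [DecidableEq B]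
    (ρ : Matrix (A × B) (A × B) ℂ) (hρ : IsDensity ρ)
    (hpure : ∃ v : A × B → ℂ, ρ = Matrix.vecMulVec v (star v)) :
    relVar ρ ((1 : Matrix A A ℂ) ⊗ₖ ptraceA ρ) = varentropy (ptraceB ρ) := by
  classical
  obtain ⟨v, hv⟩ := hpure
  have hH : ρ.IsHermitian := hρ.1.1
  have htr1 : ρ.trace = 1 := hρ.2
  set σB := ptraceA ρ with hσBdef
  set σA := ptraceB ρ with hσAdef
  have hσB : σB.IsHermitian := Helpers.ptraceA_hermitian hH
  have hσA : σA.IsHermitian := Helpers.ptraceB_hermitian hH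
  have hidem : ρ * ρ = ρ := by
    have hsum : (∑ k : A × B, v k * star (v k)) = 1 := by
      have h : ρ.trace = ∑ k : A × B, v k * star (v k) := by
        simp [hv, Matrix.trace, Matrix.diag_apply, Matrix.vecMulVec_apply]
      rw [← h, htr1]
    ext i j
    simp only [Matrix.mul_apply, hv, Matrix.vecMulVec_apply, Pi.star_apply]
    calc ∑ k, v i * star (v k) * (v k * star (v j))
        = (∑ k : A × B, v k * star (v k)) * (v i * star (v j)) := by
          rw [Finset.sum_mul]; exact Finset.sum_congr rfl fun k _ => by ring
      _ = v i * star (v j) := by rw [hsum, one_mul]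
  have hlogρ : mlog ρ = 0 := by
    rw [Helpers.mlog_eq hH]; exact Helpers.herm_idem_log_zero hH hidem
  set N : Matrix B A ℂ := Matrix.of (fun b a => v (a, b)) with hN
  have hNB : σB = N * Nᴴ := by
    ext x y
    simp [hσBdef, ptraceA, hv, Matrix.mul_apply, Matrix.vecMulVec_apply,
      Matrix.conjTranspose_apply, hN]
  have hNA : Nᴴ * N = σAᵀ := by
    ext x y
    simp only [hσAdef, ptraceB, hv, Matrix.mul_apply, Matrix.vecMulVec_apply,
      Matrix.conjTranspose_apply, hN, Matrix.transpose_apply, Matrix.of_apply, Pi.star_apply]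
    exact Finset.sum_congr rfl fun b _ => mul_comm _ _
  have htrk : ∀ k : ℕ, (σB ^ (k + 1)).trace = (σA ^ (k + 1)).trace := by
    intro k
    rw [hNB, Helpers.trace_pow_shift, hNA, ← Matrix.transpose_pow, Matrix.trace_transpose]
  have key : ∀ m : ℕ, (σB * (mlog σB) ^ m).trace = (σA * (mlog σA) ^ m).trace := by
    intro m
    rw [Helpers.mlog_eq hσB, Helpers.mlog_eq hσA, Helpers.mul_cfc_pow hσB,
      Helpers.mul_cfc_pow hσA, Helpers.cfc_trace, Helpers.cfc_trace]
    exact Helpers.spec_transfer hσB hσA htrk (fun x => x * Real.log x ^ m) (by simp)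
  have hmlogK : mlog ((1 : Matrix A A ℂ) ⊗ₖ σB) = (1 : Matrix A A ℂ) ⊗ₖ mlog σB :=
    Helpers.mlog_one_kron hσB
  have h2 : ((1 : Matrix A A ℂ) ⊗ₖ mlog σB) ^ 2 = (1 : Matrix A A ℂ) ⊗ₖ (mlog σB ^ 2) := by
    rw [sq, sq, ← Matrix.mul_kronecker_mul, Matrix.one_mul]
  have k1 : (σB * mlog σB).trace = (σA * mlog σA).trace := by simpa using key 1
  have k2 := key 2
  unfold relVar relEnt varentropy
  rw [hlogρ, hmlogK, zero_sub, neg_sq, h2, Helpers.trace_mul_one_kron, Matrix.mul_neg,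
    Matrix.trace_neg, Helpers.trace_mul_one_kron, k1, k2]
  simp [Complex.neg_re, neg_sq]
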